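/- arXiv:1901.03917 — 2 statements merged into one kernel-verified Lean document; each statement's English description precedes it below -/
import Mathlib

section
/- For every n ≥ 4, the total number of distinct 4-cycles in the Bubble-sort graph BS_n equals (n−2)(n−3)·n!/8. -/
set_option maxHeartbeats 1600000


/-- The adjacent transposition `b_i` (1-indexed, swapping positions `i` and `i+1`,
i.e. the 0-indexed positions `i-1` and `i` of `Fin n`), extended by `1` outside
the valid range `1 ≤ i ≤ n-1`. -/
def bsGen (n i : ℕ) : Equiv.Perm (Fin n) :=
  if h : 0 < i ∧ i < n then
    Equiv.swap ⟨i - 1, lt_of_le_of_lt (Nat.pred_le i) h.2⟩ ⟨i, h.2⟩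
  else 1

theorem bsGen_ne_one (n i : ℕ) (h1 : 0 < i) (h2 : i < n) : bsGen n i ≠ 1 := by
  rw [bsGen, dif_pos ⟨h1, h2⟩]
  intro h
  have h' := congrArg Fin.val (Equiv.swap_eq_one_iff.mp h)
  simp at h'
  omega

theorem bsGen_mul_self (n i : ℕ) : bsGen n i * bsGen n i = 1 := by
  rw [bsGen]; split
  · exact Equiv.swap_mul_self _ _
  · simp

/-- The Bubble-sort graph `BS_n` on the symmetric group `Sym_n = Equiv.Perm (Fin n)`:
`π` and `τ` are adjacent iff `τ = π * b_i` for some `1 ≤ i ≤ n-1`. -/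
def BS (n : ℕ) : SimpleGraph (Equiv.Perm (Fin n)) where
  Adj π τ := ∃ i, 0 < i ∧ i < n ∧ τ = π * bsGen n i
  symm := by
    constructor
    rintro π τ ⟨i, h1, h2, rfl⟩
    exact ⟨i, h1, h2, by rw [mul_assoc, bsGen_mul_self, mul_one]⟩
  loopless := by
    constructor
    rintro π ⟨i, h1, h2, h⟩
    exact bsGen_ne_one n i h1 h2 (mul_left_cancel (h.symm.trans (mul_one π).symm))

/-- `H` is an `ℓ`-cycle subgraph of `BS n`: the subgraph traced by some cycle walk
with `ℓ` vertices (equivalently, of length `ℓ`).  Since a cycle subgraph determines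
the traversal up to starting vertex and direction, counting such subgraphs counts
cycles once regardless of starting vertex and direction. -/
def IsCycleSub {n : ℕ} (H : (BS n).Subgraph) (ℓ : ℕ) : Prop :=
  ∃ (u : Equiv.Perm (Fin n)) (w : (BS n).Walk u u),
    w.IsCycle ∧ w.length = ℓ ∧ H = w.toSubgraph

/-! ### nat model -/

def bapp (i x : ℕ) : ℕ := if x + 1 = i then x + 1 else if x = i then x - 1 else x

lemma bsGen_apply {n i : ℕ} (h1 : 0 < i) (h2 : i < n) (x : Fin n) :
    (bsGen n i x : ℕ) = bapp i x.val := by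
  rw [bsGen, dif_pos ⟨h1, h2⟩, Equiv.swap_apply_def]
  unfold bapp
  split_ifs with a b c d e <;>
    first
      | rfl
      | (simp only [Fin.ext_iff, Fin.val_mk] at *; omega)

lemma bsGen_mul_apply {n i j : ℕ} (h1 : 0 < i) (h2 : i < n) (h3 : 0 < j) (h4 : j < n)
    (x : Fin n) : ((bsGen n i * bsGen n j) x : ℕ) = bapp i (bapp j x.val) := by
  rw [Equiv.Perm.mul_apply, bsGen_apply h1 h2, bsGen_apply h3 h4]

lemma bsGen_inj {n i j : ℕ} (h1 : 0 < i) (h2 : i < n) (h3 : 0 < j) (h4 : j < n)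
    (h : bsGen n i = bsGen n j) : i = j := by
  have := congrArg Fin.val (Equiv.ext_iff.mp h ⟨i - 1, by omega⟩)
  rw [bsGen_apply h1 h2, bsGen_apply h3 h4] at this
  simp only [Fin.val_mk] at this
  unfold bapp at this
  split_ifs at this <;> omega

lemma bsGen_comm {n i j : ℕ} (h1 : 0 < i) (h2 : i < n) (h3 : 0 < j) (h4 : j < n)
    (hgap : i + 2 ≤ j ∨ j + 2 ≤ i) : bsGen n i * bsGen n j = bsGen n j * bsGen n i := by
  apply Equiv.ext; intro x
  apply Fin.val_injective
  rw [bsGen_mul_apply h1 h2 h3 h4, bsGen_mul_apply h3 h4 h1 h2]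
  unfold bapp
  split_ifs <;> omega

lemma bsGen_ne {n i j : ℕ} (h1 : 0 < i) (h2 : i < n) (h3 : 0 < j) (h4 : j < n)
    (hij : i ≠ j) : bsGen n i ≠ bsGen n j :=
  fun h => hij (bsGen_inj h1 h2 h3 h4 h)

lemma bsGen_inv (n i : ℕ) : (bsGen n i)⁻¹ = bsGen n i :=
  inv_eq_of_mul_eq_one_right (bsGen_mul_self n i)

lemma bsGen_mul_ne_one {n i j : ℕ} (h1 : 0 < i) (h2 : i < n) (h3 : 0 < j) (h4 : j < n)
    (hij : i ≠ j) : bsGen n i * bsGen n j ≠ 1 := by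
  intro h
  exact bsGen_ne h1 h2 h3 h4 hij (by
    have := congrArg (· * bsGen n j) h
    simp only [mul_assoc, bsGen_mul_self, mul_one, one_mul] at this
    exact this)
lemma classify_nat {n a b c d : ℕ} (ha : 0 < a) (han : a < n) (hb : 0 < b) (hbn : b < n)
    (hc : 0 < c) (hcn : c < n) (hd : 0 < d) (hdn : d < n) (hab : a ≠ b) (hbc : b ≠ c)
    (H : ∀ x, x < n → bapp a (bapp b x) = bapp d (bapp c x)) :
    c = a ∧ d = b ∧ (a + 2 ≤ b ∨ b + 2 ≤ a) := by
  -- step 1 : c ≠ d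
  have hcd : c ≠ d := by
    intro hccd
    have h1 := H (a-1) (by omega)
    have g1 : bapp d (bapp c (a-1)) = a - 1 := by unfold bapp; split_ifs <;> omega
    have f1 : bapp a (bapp b (a-1)) = a - 1 := by omega
    unfold bapp at f1; split_ifs at f1 <;> omega
  rcases (show b = a + 1 ∨ a = b + 1 ∨ (a + 2 ≤ b ∨ b + 2 ≤ a) by omega) with hB | hB | hB
  · exfalso
    rcases (show c = d + 1 ∨ d = c + 1 ∨ (c + 2 ≤ d ∨ d + 2 ≤ c) by omega) with hC | hC | hC
    · -- G is the 3-cycle d-1 ↦ d ↦ d+1 ↦ d-1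
      have h1 := H d (by omega)
      have g1 : bapp d (bapp c d) = d + 1 := by unfold bapp; split_ifs <;> omega
      have f1 : bapp a (bapp b d) = d + 1 := by omega
      have hda : d = a - 1 ∨ d = a := by
        unfold bapp at f1; split_ifs at f1 <;> omega
      rcases hda with hda | hda
      · have h2 := H a (by omega)
        have f2 : bapp a (bapp b a) = a + 1 := by unfold bapp; split_ifs <;> omega
        have g2 : bapp d (bapp c a) = a + 1 := by omega
        unfold bapp at g2; split_ifs at g2 <;> omega
      · omega
    · have h1 := H (c-1) (by omega)
      have g1 : bapp d (bapp c (c-1)) = c + 1 := by unfold bapp; split_ifs <;> omega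
      have f1 : bapp a (bapp b (c-1)) = c + 1 := by omega
      unfold bapp at f1; split_ifs at f1 <;> omega
    · have h1 := H (a-1) (by omega)
      have f1 : bapp a (bapp b (a-1)) = a := by unfold bapp; split_ifs <;> omega
      have g1 : bapp d (bapp c (a-1)) = a := by omega
      have h2 := H a (by omega)
      have f2 : bapp a (bapp b a) = a + 1 := by unfold bapp; split_ifs <;> omega
      have g2 : bapp d (bapp c a) = a + 1 := by omega
      have e1 : c = a ∨ d = a := by unfold bapp at g1; split_ifs at g1 <;> omega
      have e2 : c = a + 1 ∨ d = a + 1 := by unfold bapp at g2; split_ifs at g2 <;> omega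
      omega
  · exfalso
    rcases (show c = d + 1 ∨ d = c + 1 ∨ (c + 2 ≤ d ∨ d + 2 ≤ c) by omega) with hC | hC | hC
    · have h1 := H (d-1) (by omega)
      have g1 : bapp d (bapp c (d-1)) = d := by unfold bapp; split_ifs <;> omega
      have f1 : bapp a (bapp b (d-1)) = d := by omega
      unfold bapp at f1; split_ifs at f1 <;> omega
    · have h1 := H (c-1) (by omega)
      have g1 : bapp d (bapp c (c-1)) = c + 1 := by unfold bapp; split_ifs <;> omega
      have f1 : bapp a (bapp b (c-1)) = c + 1 := by omega
      unfold bapp at f1; split_ifs at f1 <;> omega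
    · have h1 := H (b-1) (by omega)
      have f1 : bapp a (bapp b (b-1)) = b + 1 := by unfold bapp; split_ifs <;> omega
      have g1 : bapp d (bapp c (b-1)) = b + 1 := by omega
      unfold bapp at g1; split_ifs at g1 <;> omega
  · rcases (show c = d + 1 ∨ d = c + 1 ∨ (c + 2 ≤ d ∨ d + 2 ≤ c) by omega) with hC | hC | hC
    · exfalso
      have h1 := H (d+1) (by omega)
      have g1 : bapp d (bapp c (d+1)) = d - 1 := by unfold bapp; split_ifs <;> omega
      have f1 : bapp a (bapp b (d+1)) = d - 1 := by omega
      unfold bapp at f1; split_ifs at f1 <;> omega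
    · exfalso
      have h1 := H (c-1) (by omega)
      have g1 : bapp d (bapp c (c-1)) = c + 1 := by unfold bapp; split_ifs <;> omega
      have f1 : bapp a (bapp b (c-1)) = c + 1 := by omega
      unfold bapp at f1; split_ifs at f1 <;> omega
    · have h1 := H (c-1) (by omega)
      have g1 : bapp d (bapp c (c-1)) = c := by unfold bapp; split_ifs <;> omega
      have f1 : bapp a (bapp b (c-1)) = c := by omega
      have hca : c = a := by
        unfold bapp at f1; split_ifs at f1 <;> omega
      have h2 := H (b-1) (by omega)
      have f2 : bapp a (bapp b (b-1)) = b := by unfold bapp; split_ifs <;> omega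
      have g2 : bapp d (bapp c (b-1)) = b := by omega
      have hdb : d = b := by
        unfold bapp at g2; split_ifs at g2 <;> omega
      exact ⟨hca, hdb, hB⟩

lemma classify {n a b c d : ℕ} (ha : 0 < a) (han : a < n) (hb : 0 < b) (hbn : b < n)
    (hc : 0 < c) (hcn : c < n) (hd : 0 < d) (hdn : d < n) (hab : a ≠ b) (hbc : b ≠ c)
    (H : bsGen n a * bsGen n b = bsGen n d * bsGen n c) :
    c = a ∧ d = b ∧ (a + 2 ≤ b ∨ b + 2 ≤ a) := by
  refine classify_nat ha han hb hbn hc hcn hd hdn hab hbc (fun x hx => ?_)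
  have := congrArg Fin.val (Equiv.ext_iff.mp H ⟨x, hx⟩)
  rw [bsGen_mul_apply ha han hb hbn, bsGen_mul_apply hd hdn hc hcn] at this
  exact this

section Walks

variable {n : ℕ} {π : Equiv.Perm (Fin n)} {i j : ℕ}

lemma ne_mul_bsGen (π : Equiv.Perm (Fin n)) (h1 : 0 < i) (h2 : i < n) :
    π ≠ π * bsGen n i :=
  fun h => bsGen_ne_one n i h1 h2 (left_eq_mul.mp h)

lemma ne_mul_mul (π : Equiv.Perm (Fin n)) (h1 : 0 < i) (h2 : i < n) (h3 : 0 < j) (h4 : j < n)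
    (hij : i ≠ j) : π ≠ π * bsGen n i * bsGen n j := by
  rw [mul_assoc]
  intro h
  exact bsGen_mul_ne_one h1 h2 h3 h4 hij (left_eq_mul.mp h)

lemma mul_ne_mul (π : Equiv.Perm (Fin n)) (h1 : 0 < i) (h2 : i < n) (h3 : 0 < j) (h4 : j < n)
    (hij : i ≠ j) : π * bsGen n i ≠ π * bsGen n j :=
  fun h => bsGen_ne h1 h2 h3 h4 hij (mul_left_cancel h)

variable (hi1 : 0 < i) (hi2 : i < n) (hj1 : 0 < j) (hj2 : j < n)
  (hgap : i + 2 ≤ j ∨ j + 2 ≤ i)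

/-- the canonical 4-cycle walk `π, πbᵢ, πbᵢbⱼ, πbⱼ, π`. -/
def cycWalk (π : Equiv.Perm (Fin n)) (hi1 : 0 < i) (hi2 : i < n) (hj1 : 0 < j) (hj2 : j < n)
    (hgap : i + 2 ≤ j ∨ j + 2 ≤ i) : (BS n).Walk π π :=
  .cons (show (BS n).Adj π (π * bsGen n i) from ⟨i, hi1, hi2, rfl⟩) <|
    .cons (show (BS n).Adj (π * bsGen n i) (π * bsGen n i * bsGen n j) from ⟨j, hj1, hj2, rfl⟩) <|
    .cons (show (BS n).Adj (π * bsGen n i * bsGen n j) (π * bsGen n j) from ⟨i, hi1, hi2, by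
      simp only [mul_assoc]
      rw [← bsGen_comm hi1 hi2 hj1 hj2 hgap, ← mul_assoc (bsGen n i) (bsGen n i),
        bsGen_mul_self, one_mul]⟩) <|
    .cons (show (BS n).Adj (π * bsGen n j) π from
      ⟨j, hj1, hj2, by rw [mul_assoc, bsGen_mul_self, mul_one]⟩) .nil

lemma cycWalk_length : (cycWalk π hi1 hi2 hj1 hj2 hgap).length = 4 := rfl

lemma cycWalk_isCycle (hij : i ≠ j) : (cycWalk π hi1 hi2 hj1 hj2 hgap).IsCycle := by
  have hji : j ≠ i := fun h => hij h.symm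
  have d1 := ne_mul_bsGen π hi1 hi2
  have d2 := ne_mul_bsGen π hj1 hj2
  have d3 := ne_mul_mul π hi1 hi2 hj1 hj2 hij
  have d4 := mul_ne_mul π hi1 hi2 hj1 hj2 hij
  have d5 := ne_mul_bsGen (π * bsGen n i) hj1 hj2
  have d6 : π * bsGen n j ≠ π * bsGen n i * bsGen n j :=
    fun h => d1 (mul_right_cancel h)
  have e1 := d1.symm; have e2 := d2.symm; have e3 := d3.symm
  have e4 := d4.symm; have e5 := d5.symm; have e6 := d6.symm
  rw [SimpleGraph.Walk.isCycle_def]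
  refine ⟨?_, by simp [cycWalk], ?_⟩
  · rw [SimpleGraph.Walk.isTrail_def]
    simp only [cycWalk, SimpleGraph.Walk.edges_cons, SimpleGraph.Walk.edges_nil,
      List.nodup_cons, List.mem_cons, List.not_mem_nil, or_false, List.nodup_nil, and_true,
      Sym2.eq, Sym2.rel_iff', Prod.mk.injEq, Prod.swap_prod_mk]
    tauto
  · simp only [cycWalk, SimpleGraph.Walk.support_cons, SimpleGraph.Walk.support_nil,
      List.tail_cons, List.nodup_cons, List.mem_cons, List.not_mem_nil, or_false,
      List.nodup_nil, and_true]
    tauto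

end Walks

section NormalForm

variable {n : ℕ} {π : Equiv.Perm (Fin n)} {i j : ℕ}
  (hi1 : 0 < i) (hi2 : i < n) (hj1 : 0 < j) (hj2 : j < n)
  (hgap : i + 2 ≤ j ∨ j + 2 ≤ i)

lemma cycWalk_toSubgraph_verts :
    (cycWalk π hi1 hi2 hj1 hj2 hgap).toSubgraph.verts =
      {π, π * bsGen n i, π * bsGen n i * bsGen n j, π * bsGen n j} := by
  ext x
  simp [cycWalk, SimpleGraph.Walk.mem_verts_toSubgraph, SimpleGraph.Walk.support_cons]
  tauto

lemma cycWalk_toSubgraph_adj {x y : Equiv.Perm (Fin n)} :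
    (cycWalk π hi1 hi2 hj1 hj2 hgap).toSubgraph.Adj x y ↔
      s(x, y) = s(π, π * bsGen n i) ∨
      s(x, y) = s(π * bsGen n i, π * bsGen n i * bsGen n j) ∨
      s(x, y) = s(π * bsGen n i * bsGen n j, π * bsGen n j) ∨
      s(x, y) = s(π * bsGen n j, π) := by
  simp [cycWalk, SimpleGraph.Subgraph.sup_adj, SimpleGraph.subgraphOfAdj_adj,
    SimpleGraph.singletonSubgraph_adj, eq_comm]

end NormalForm

section AdjResolve

variable {n : ℕ} {u y : Equiv.Perm (Fin n)} {i j : ℕ}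
  (hi1 : 0 < i) (hi2 : i < n) (hj1 : 0 < j) (hj2 : j < n)
  (hgap : i + 2 ≤ j ∨ j + 2 ≤ i)

lemma cyc_adj_u
    (h : (cycWalk u hi1 hi2 hj1 hj2 hgap).toSubgraph.Adj u y) :
    y = u * bsGen n i ∨ y = u * bsGen n j := by
  have hij : i ≠ j := by omega
  have d1 := ne_mul_bsGen u hi1 hi2
  have d2 := ne_mul_bsGen u hj1 hj2
  have d3 := ne_mul_mul u hi1 hi2 hj1 hj2 hij
  rw [cycWalk_toSubgraph_adj] at h
  simp only [Sym2.eq_iff] at h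
  tauto

lemma cyc_adj_ubi
    (h : (cycWalk u hi1 hi2 hj1 hj2 hgap).toSubgraph.Adj (u * bsGen n i) y) :
    y = u ∨ y = u * bsGen n i * bsGen n j := by
  have hij : i ≠ j := by omega
  have d1 := ne_mul_bsGen u hi1 hi2
  have d4 := mul_ne_mul u hi1 hi2 hj1 hj2 hij
  have d5 := ne_mul_bsGen (u * bsGen n i) hj1 hj2
  rw [cycWalk_toSubgraph_adj] at h
  simp only [Sym2.eq_iff] at h
  tauto

lemma cyc_adj_ubj
    (h : (cycWalk u hi1 hi2 hj1 hj2 hgap).toSubgraph.Adj (u * bsGen n j) y) :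
    y = u ∨ y = u * bsGen n i * bsGen n j := by
  have hij : i ≠ j := by omega
  have d2 := ne_mul_bsGen u hj1 hj2
  have d4 := mul_ne_mul u hi1 hi2 hj1 hj2 hij
  have d6 : u * bsGen n j ≠ u * bsGen n i * bsGen n j :=
    fun h' => ne_mul_bsGen u hi1 hi2 (mul_right_cancel h')
  rw [cycWalk_toSubgraph_adj] at h
  simp only [Sym2.eq_iff] at h
  tauto

lemma cyc_adj_ubibj
    (h : (cycWalk u hi1 hi2 hj1 hj2 hgap).toSubgraph.Adj (u * bsGen n i * bsGen n j) y) :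
    y = u * bsGen n i ∨ y = u * bsGen n j := by
  have hij : i ≠ j := by omega
  have d3 := ne_mul_mul u hi1 hi2 hj1 hj2 hij
  have d5 := ne_mul_bsGen (u * bsGen n i) hj1 hj2
  have d6 : u * bsGen n j ≠ u * bsGen n i * bsGen n j :=
    fun h' => ne_mul_bsGen u hi1 hi2 (mul_right_cancel h')
  rw [cycWalk_toSubgraph_adj] at h
  simp only [Sym2.eq_iff] at h
  tauto

end AdjResolve

section SwapShift

variable {n : ℕ} {π : Equiv.Perm (Fin n)} {i j : ℕ}
  (hi1 : 0 < i) (hi2 : i < n) (hj1 : 0 < j) (hj2 : j < n)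
  (hgap : i + 2 ≤ j ∨ j + 2 ≤ i)

lemma cycWalk_swap :
    (cycWalk π hj1 hj2 hi1 hi2 hgap.symm).toSubgraph =
      (cycWalk π hi1 hi2 hj1 hj2 hgap).toSubgraph := by
  have hc : π * bsGen n j * bsGen n i = π * bsGen n i * bsGen n j := by
    rw [mul_assoc, ← bsGen_comm hi1 hi2 hj1 hj2 hgap, ← mul_assoc]
  apply SimpleGraph.Subgraph.ext
  · rw [cycWalk_toSubgraph_verts, cycWalk_toSubgraph_verts, hc]
    ext x; simp only [Set.mem_insert_iff, Set.mem_singleton_iff]; tauto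
  · funext x y
    apply propext
    rw [cycWalk_toSubgraph_adj, cycWalk_toSubgraph_adj, hc]
    constructor
    · rintro (h | h | h | h)
      · exact Or.inr (Or.inr (Or.inr (h.trans Sym2.eq_swap)))
      · exact Or.inr (Or.inr (Or.inl (h.trans Sym2.eq_swap)))
      · exact Or.inr (Or.inl (h.trans Sym2.eq_swap))
      · exact Or.inl (h.trans Sym2.eq_swap)
    · rintro (h | h | h | h)
      · exact Or.inr (Or.inr (Or.inr (h.trans Sym2.eq_swap)))
      · exact Or.inr (Or.inr (Or.inl (h.trans Sym2.eq_swap)))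
      · exact Or.inr (Or.inl (h.trans Sym2.eq_swap))
      · exact Or.inl (h.trans Sym2.eq_swap)

lemma cycWalk_shift :
    (cycWalk (π * bsGen n i) hi1 hi2 hj1 hj2 hgap).toSubgraph =
      (cycWalk π hi1 hi2 hj1 hj2 hgap).toSubgraph := by
  have hii : π * bsGen n i * bsGen n i = π := by rw [mul_assoc, bsGen_mul_self, mul_one]
  apply SimpleGraph.Subgraph.ext
  · rw [cycWalk_toSubgraph_verts, cycWalk_toSubgraph_verts, hii]
    ext x; simp only [Set.mem_insert_iff, Set.mem_singleton_iff]; tauto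
  · funext x y
    apply propext
    rw [cycWalk_toSubgraph_adj, cycWalk_toSubgraph_adj, hii]
    constructor
    · rintro (h | h | h | h)
      · exact Or.inl (h.trans Sym2.eq_swap)
      · exact Or.inr (Or.inr (Or.inr (h.trans Sym2.eq_swap)))
      · exact Or.inr (Or.inr (Or.inl (h.trans Sym2.eq_swap)))
      · exact Or.inr (Or.inl (h.trans Sym2.eq_swap))
    · rintro (h | h | h | h)
      · exact Or.inl (h.trans Sym2.eq_swap)
      · exact Or.inr (Or.inr (Or.inr (h.trans Sym2.eq_swap)))
      · exact Or.inr (Or.inr (Or.inl (h.trans Sym2.eq_swap)))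
      · exact Or.inr (Or.inl (h.trans Sym2.eq_swap))

end SwapShift

section Fiber

lemma bsGen_eq_of_mul_eq_one {n i j : ℕ} (h1 : 0 < i) (h2 : i < n) (h3 : 0 < j) (h4 : j < n)
    (h : bsGen n i * bsGen n j = 1) : i = j := by
  by_contra hne
  exact bsGen_mul_ne_one h1 h2 h3 h4 hne h

lemma mul_gen_cancel {n : ℕ} {u : Equiv.Perm (Fin n)} {a i : ℕ}
    (ha1 : 0 < a) (ha2 : a < n) (hi1 : 0 < i) (hi2 : i < n)
    (h : u * bsGen n a = u * bsGen n i) : a = i :=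
  bsGen_inj ha1 ha2 hi1 hi2 (mul_left_cancel h)

variable {n : ℕ} {π u : Equiv.Perm (Fin n)} {a b i j : ℕ}
  {ha1 : 0 < a} {ha2 : a < n} {hb1 : 0 < b} {hb2 : b < n}
  {hgab : a + 2 ≤ b ∨ b + 2 ≤ a}
  {hi1 : 0 < i} {hi2 : i < n} {hj1 : 0 < j} {hj2 : j < n}
  {hgij : i + 2 ≤ j ∨ j + 2 ≤ i}

/-- if the 4-cycles of `(π,a,b)` and `(u,i,j)` coincide, then `π` is one of the four
vertices and `{a,b} = {i,j}`. -/
lemma fiber_mem8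
    (hEq : (cycWalk π ha1 ha2 hb1 hb2 hgab).toSubgraph =
      (cycWalk u hi1 hi2 hj1 hj2 hgij).toSubgraph) :
    (π = u ∨ π = u * bsGen n i ∨ π = u * bsGen n i * bsGen n j ∨ π = u * bsGen n j) ∧
      ((a = i ∧ b = j) ∨ (a = j ∧ b = i)) := by
  have hab : a ≠ b := by omega
  have hc : u * bsGen n i * bsGen n j = u * bsGen n j * bsGen n i := by
    rw [mul_assoc, bsGen_comm hi1 hi2 hj1 hj2 hgij, ← mul_assoc]
  have hπ : π ∈ (cycWalk u hi1 hi2 hj1 hj2 hgij).toSubgraph.verts := by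
    rw [← hEq, cycWalk_toSubgraph_verts]; left; rfl
  rw [cycWalk_toSubgraph_verts] at hπ
  simp only [Set.mem_insert_iff, Set.mem_singleton_iff] at hπ
  have hA : (cycWalk u hi1 hi2 hj1 hj2 hgij).toSubgraph.Adj π (π * bsGen n a) := by
    rw [← hEq, cycWalk_toSubgraph_adj]; exact Or.inl rfl
  have hB : (cycWalk u hi1 hi2 hj1 hj2 hgij).toSubgraph.Adj π (π * bsGen n b) := by
    rw [← hEq, cycWalk_toSubgraph_adj]
    exact Or.inr (Or.inr (Or.inr Sym2.eq_swap))
  rcases hπ with rfl | rfl | rfl | rfl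
  · -- π = u
    have ra : a = i ∨ a = j := by
      rcases cyc_adj_u hi1 hi2 hj1 hj2 hgij hA with h | h
      · exact Or.inl (mul_gen_cancel ha1 ha2 hi1 hi2 h)
      · exact Or.inr (mul_gen_cancel ha1 ha2 hj1 hj2 h)
    have rb : b = i ∨ b = j := by
      rcases cyc_adj_u hi1 hi2 hj1 hj2 hgij hB with h | h
      · exact Or.inl (mul_gen_cancel hb1 hb2 hi1 hi2 h)
      · exact Or.inr (mul_gen_cancel hb1 hb2 hj1 hj2 h)
    exact ⟨Or.inl rfl, by omega⟩
  · -- π = u * bᵢ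
    have key : ∀ c : ℕ, 0 < c → c < n →
        (cycWalk u hi1 hi2 hj1 hj2 hgij).toSubgraph.Adj (u * bsGen n i)
          (u * bsGen n i * bsGen n c) → c = i ∨ c = j := by
      intro c hc1 hc2 hAdj
      rcases cyc_adj_ubi hi1 hi2 hj1 hj2 hgij hAdj with h | h
      · rw [mul_assoc] at h
        exact Or.inl (bsGen_eq_of_mul_eq_one hi1 hi2 hc1 hc2
          (left_eq_mul.mp h.symm)).symm
      · exact Or.inr (mul_gen_cancel hc1 hc2 hj1 hj2 h)
    have ra := key a ha1 ha2 hA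
    have rb := key b hb1 hb2 hB
    exact ⟨Or.inr (Or.inl rfl), by omega⟩
  · -- π = u * bᵢ * bⱼ
    have key : ∀ c : ℕ, 0 < c → c < n →
        (cycWalk u hi1 hi2 hj1 hj2 hgij).toSubgraph.Adj (u * bsGen n i * bsGen n j)
          (u * bsGen n i * bsGen n j * bsGen n c) → c = i ∨ c = j := by
      intro c hc1 hc2 hAdj
      rcases cyc_adj_ubibj hi1 hi2 hj1 hj2 hgij hAdj with h | h
      · rw [mul_assoc (u * bsGen n i)] at h
        exact Or.inr (bsGen_eq_of_mul_eq_one hj1 hj2 hc1 hc2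
          (left_eq_mul.mp h.symm)).symm
      · rw [hc, mul_assoc (u * bsGen n j)] at h
        exact Or.inl (bsGen_eq_of_mul_eq_one hi1 hi2 hc1 hc2
          (left_eq_mul.mp h.symm)).symm
    have ra := key a ha1 ha2 hA
    have rb := key b hb1 hb2 hB
    exact ⟨Or.inr (Or.inr (Or.inl rfl)), by omega⟩
  · -- π = u * bⱼ
    have key : ∀ c : ℕ, 0 < c → c < n →
        (cycWalk u hi1 hi2 hj1 hj2 hgij).toSubgraph.Adj (u * bsGen n j)
          (u * bsGen n j * bsGen n c) → c = i ∨ c = j := by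
      intro c hc1 hc2 hAdj
      rcases cyc_adj_ubj hi1 hi2 hj1 hj2 hgij hAdj with h | h
      · rw [mul_assoc] at h
        exact Or.inr (bsGen_eq_of_mul_eq_one hj1 hj2 hc1 hc2
          (left_eq_mul.mp h.symm)).symm
      · rw [hc] at h
        exact Or.inl (mul_gen_cancel hc1 hc2 hi1 hi2 h)
    have ra := key a ha1 ha2 hA
    have rb := key b hb1 hb2 hB
    exact ⟨Or.inr (Or.inr (Or.inr rfl)), by omega⟩

end Fiber

section Decomp

lemma cycle4_decomp {n : ℕ} {H : (BS n).Subgraph} (h : IsCycleSub H 4) :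
    ∃ (u : Equiv.Perm (Fin n)) (i j : ℕ) (hi1 : 0 < i) (hi2 : i < n) (hj1 : 0 < j)
      (hj2 : j < n) (hgap : i + 2 ≤ j ∨ j + 2 ≤ i),
      H = (cycWalk u hi1 hi2 hj1 hj2 hgap).toSubgraph := by
  obtain ⟨u, w, hcyc, hlen, rfl⟩ := h
  cases w with
  | nil => simp at hlen
  | cons h1 p =>
  cases p with
  | nil => simp at hlen
  | cons h2 p =>
  cases p with
  | nil => simp at hlen
  | cons h3 p =>
  cases p with
  | nil => simp at hlen
  | cons h4 p =>
  cases p with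
  | cons h5 p =>
    exfalso
    simp only [SimpleGraph.Walk.length_cons] at hlen
    omega
  | nil =>
  clear hlen
  rename_i v1 v2 v3
  obtain ⟨i1, h11, h12, rfl⟩ := id h1
  obtain ⟨i2, h21, h22, rfl⟩ := id h2
  obtain ⟨i3, h31, h32, hv3⟩ := id h3
  obtain ⟨i4, h41, h42, h4eq⟩ := id h4
  -- nodup facts
  rw [SimpleGraph.Walk.isCycle_def] at hcyc
  obtain ⟨-, -, hnd⟩ := hcyc
  simp only [SimpleGraph.Walk.support_cons, SimpleGraph.Walk.support_nil, List.tail_cons,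
    List.nodup_cons, List.mem_cons, List.not_mem_nil, or_false, List.nodup_nil, and_true] at hnd
  have hne12 : i1 ≠ i2 := by
    intro he
    exact hnd.2.1 (Or.inr (by rw [← he, mul_assoc, bsGen_mul_self, mul_one]))
  have hne23 : i2 ≠ i3 := by
    intro he
    have hx : u * bsGen n i1 * bsGen n i2 * bsGen n i3 = u * bsGen n i1 := by
      rw [← he, mul_assoc (u * bsGen n i1), bsGen_mul_self, mul_one]
    rw [← hv3] at hx
    exact hnd.1 (Or.inr (Or.inl hx.symm))
  -- the product relation
  rw [hv3] at h4eq
  simp only [mul_assoc] at h4eq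
  have hone := left_eq_mul.mp h4eq
  have hprod : bsGen n i1 * bsGen n i2 = bsGen n i4 * bsGen n i3 := by
    have h' : bsGen n i1 * bsGen n i2 = (bsGen n i3 * bsGen n i4)⁻¹ := by
      rw [eq_inv_iff_mul_eq_one]
      simpa [mul_assoc] using hone
    rw [mul_inv_rev, bsGen_inv, bsGen_inv] at h'
    exact h'
  obtain ⟨h31', h42', hgap⟩ :=
    classify h11 h12 h21 h22 h31 h32 h41 h42 hne12 hne23 hprod
  have hv3' : v3 = u * bsGen n i1 * bsGen n i2 * bsGen n i1 := by rw [hv3, h31']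
  rw [show u * bsGen n i1 * bsGen n i2 * bsGen n i1 = u * bsGen n i2 by
    simp only [mul_assoc]
    rw [← bsGen_comm h11 h12 h21 h22 hgap, ← mul_assoc (bsGen n i1), bsGen_mul_self, one_mul]] at hv3'
  subst hv3'
  exact ⟨u, i1, i2, h11, h12, h21, h22, hgap, rfl⟩

end Decomp

section PairCount

open Finset

/-- ℕ-model of the index-pair set -/
def npairs (k : ℕ) : Finset (ℕ × ℕ) :=
  (Finset.range k ×ˢ Finset.range k).filter
    (fun p => 0 < p.1 ∧ 0 < p.2 ∧ (p.1 + 2 ≤ p.2 ∨ p.2 + 2 ≤ p.1))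

lemma npairs_card : ∀ k, (npairs k).card = (k - 2) * (k - 3) := by
  intro k
  induction k with
  | zero => simp [npairs]
  | succ k ih =>
    have hsplit : npairs (k+1) =
        (npairs k ∪ (Finset.Ico 1 (k-1)).image (fun m => (k, m))) ∪
          (Finset.Ico 1 (k-1)).image (fun m => (m, k)) := by
      ext p
      obtain ⟨x, y⟩ := p
      simp only [npairs, Finset.mem_union, Finset.mem_image, Finset.mem_filter,
        Finset.mem_product, Finset.mem_range, Finset.mem_Ico, Prod.mk.injEq]
      constructor
      · rintro ⟨⟨hx, hy⟩, h1, h2, h3⟩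
        by_cases hxk : x = k
        · exact Or.inl (Or.inr ⟨y, by omega, by omega, rfl⟩)
        · by_cases hyk : y = k
          · exact Or.inr ⟨x, by omega, rfl, by omega⟩
          · exact Or.inl (Or.inl ⟨⟨by omega, by omega⟩, h1, h2, h3⟩)
      · rintro ((⟨⟨hx, hy⟩, h1, h2, h3⟩ | ⟨m, hm, hm1, hm2⟩) | ⟨m, hm, hm1, hm2⟩) <;>
          refine ⟨⟨by omega, by omega⟩, by omega, by omega, by omega⟩
    have hd1 : Disjoint (npairs k) ((Finset.Ico 1 (k-1)).image (fun m => (k, m))) := by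
      rw [Finset.disjoint_left]
      rintro ⟨x, y⟩ hx hy
      simp only [npairs, Finset.mem_filter, Finset.mem_product, Finset.mem_range] at hx
      simp only [Finset.mem_image, Finset.mem_Ico, Prod.mk.injEq] at hy
      obtain ⟨m, hm, hm1, hm2⟩ := hy
      omega
    have hd2 : Disjoint (npairs k ∪ (Finset.Ico 1 (k-1)).image (fun m => (k, m)))
        ((Finset.Ico 1 (k-1)).image (fun m => (m, k))) := by
      rw [Finset.disjoint_left]
      rintro ⟨x, y⟩ hx hy
      simp only [Finset.mem_union, npairs, Finset.mem_filter, Finset.mem_product,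
        Finset.mem_range, Finset.mem_image, Finset.mem_Ico, Prod.mk.injEq] at hx
      simp only [Finset.mem_image, Finset.mem_Ico, Prod.mk.injEq] at hy
      obtain ⟨m, hm, hm1, hm2⟩ := hy
      rcases hx with ⟨⟨h1, h2⟩, -⟩ | ⟨m', hm', hm'1, hm'2⟩ <;> omega
    have hi1 : Function.Injective (fun m : ℕ => (k, m)) := by
      intro a b h; simpa using h
    have hi2 : Function.Injective (fun m : ℕ => (m, k)) := by
      intro a b h; simpa using h
    rw [hsplit, Finset.card_union_of_disjoint hd2, Finset.card_union_of_disjoint hd1,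
      Finset.card_image_of_injective _ hi1, Finset.card_image_of_injective _ hi2,
      Nat.card_Ico, ih]
    rcases Nat.lt_or_ge k 3 with hk | hk
    · interval_cases k <;> simp
    · obtain ⟨m, rfl⟩ := Nat.exists_eq_add_of_le hk
      rw [show 3 + m + 1 - 2 = m + 2 by omega, show 3 + m + 1 - 3 = m + 1 by omega,
        show 3 + m - 2 = m + 1 by omega, show 3 + m - 3 = m by omega,
        show 3 + m - 1 - 1 = m + 1 by omega]
      ring

lemma finpairs_card (n : ℕ) :
    ((Finset.univ : Finset (Fin n × Fin n)).filter
      (fun p => 0 < (p.1 : ℕ) ∧ 0 < (p.2 : ℕ) ∧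
        ((p.1 : ℕ) + 2 ≤ (p.2 : ℕ) ∨ (p.2 : ℕ) + 2 ≤ (p.1 : ℕ)))).card = (n - 2) * (n - 3) := by
  rw [← npairs_card n]
  apply Finset.card_bij (fun p _ => ((p.1 : ℕ), (p.2 : ℕ)))
  · rintro ⟨x, y⟩ ha
    simp only [Finset.mem_filter, Finset.mem_univ, true_and] at ha
    simp only [npairs, Finset.mem_filter, Finset.mem_product, Finset.mem_range]
    exact ⟨⟨x.isLt, y.isLt⟩, ha⟩
  · rintro ⟨x, y⟩ h1 ⟨x', y'⟩ h2 h
    simp only [Prod.mk.injEq] at h ⊢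
    exact ⟨Fin.val_injective h.1, Fin.val_injective h.2⟩
  · rintro ⟨x, y⟩ hb
    simp only [npairs, Finset.mem_filter, Finset.mem_product, Finset.mem_range] at hb
    exact ⟨(⟨x, hb.1.1⟩, ⟨y, hb.1.2⟩), by
      simp only [Finset.mem_filter, Finset.mem_univ, true_and]; exact hb.2, rfl⟩

end PairCount

section GDef

def bsCond (n : ℕ) (t : Equiv.Perm (Fin n) × Fin n × Fin n) : Prop :=
  0 < (t.2.1 : ℕ) ∧ 0 < (t.2.2 : ℕ) ∧
    ((t.2.1 : ℕ) + 2 ≤ (t.2.2 : ℕ) ∨ (t.2.2 : ℕ) + 2 ≤ (t.2.1 : ℕ))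

instance (n : ℕ) (t : Equiv.Perm (Fin n) × Fin n × Fin n) : Decidable (bsCond n t) := by
  unfold bsCond; infer_instance

def gSub (n : ℕ) (t : Equiv.Perm (Fin n) × Fin n × Fin n) : (BS n).Subgraph :=
  if h : bsCond n t then
    (cycWalk t.1 h.1 t.2.1.isLt h.2.1 t.2.2.isLt h.2.2).toSubgraph
  else ⊥

lemma gSub_eq_cyc {n : ℕ} (u : Equiv.Perm (Fin n)) {i j : ℕ} (hi1 : 0 < i) (hi2 : i < n)
    (hj1 : 0 < j) (hj2 : j < n) (hgap : i + 2 ≤ j ∨ j + 2 ≤ i) :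
    gSub n (u, ⟨i, hi2⟩, ⟨j, hj2⟩) = (cycWalk u hi1 hi2 hj1 hj2 hgap).toSubgraph := by
  rw [gSub, dif_pos (show bsCond n (u, ⟨i, hi2⟩, ⟨j, hj2⟩) from ⟨hi1, hj1, hgap⟩)]

lemma gSub_isCycleSub {n : ℕ} {t : Equiv.Perm (Fin n) × Fin n × Fin n} (h : bsCond n t) :
    IsCycleSub (gSub n t) 4 := by
  rw [gSub, dif_pos h]
  exact ⟨t.1, cycWalk t.1 h.1 t.2.1.isLt h.2.1 t.2.2.isLt h.2.2,
    cycWalk_isCycle _ _ _ _ _ (by have := h.2.2; omega), rfl, rfl⟩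

end GDef


section FiberCard

open Finset
open scoped Classical

lemma fiber_card {n : ℕ} (u : Equiv.Perm (Fin n)) {i j : ℕ} (hi1 : 0 < i) (hi2 : i < n)
    (hj1 : 0 < j) (hj2 : j < n) (hgap : i + 2 ≤ j ∨ j + 2 ≤ i) :
    ((Finset.univ : Finset (Equiv.Perm (Fin n) × Fin n × Fin n)).filter
      (fun t => bsCond n t ∧ gSub n t = (cycWalk u hi1 hi2 hj1 hj2 hgap).toSubgraph)).card
      = 8 := by
  classical
  have hij : i ≠ j := by omega
  set fi : Fin n := ⟨i, hi2⟩ with hfi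
  set fj : Fin n := ⟨j, hj2⟩ with hfj
  set K := (cycWalk u hi1 hi2 hj1 hj2 hgap).toSubgraph with hK
  -- the eight elements of the fiber
  set L : List (Equiv.Perm (Fin n) × Fin n × Fin n) :=
    [(u, fi, fj), (u, fj, fi),
     (u * bsGen n i, fi, fj), (u * bsGen n i, fj, fi),
     (u * bsGen n j, fi, fj), (u * bsGen n j, fj, fi),
     (u * bsGen n i * bsGen n j, fi, fj), (u * bsGen n i * bsGen n j, fj, fi)] with hL
  -- distinctness facts
  have D1 := ne_mul_bsGen u hi1 hi2
  have D2 := ne_mul_bsGen u hj1 hj2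
  have D3 := ne_mul_mul u hi1 hi2 hj1 hj2 hij
  have D4 := mul_ne_mul u hi1 hi2 hj1 hj2 hij
  have D5 := ne_mul_bsGen (u * bsGen n i) hj1 hj2
  have D6 : u * bsGen n j ≠ u * bsGen n i * bsGen n j :=
    fun h' => D1 (mul_right_cancel h')
  have F1 : fi ≠ fj := by simp only [hfi, hfj, ne_eq, Fin.mk.injEq]; omega
  have F2 := F1.symm
  -- the eight fiber equalities
  have c1 : gSub n (u, fi, fj) = K := gSub_eq_cyc u hi1 hi2 hj1 hj2 hgap
  have c2 : gSub n (u, fj, fi) = K :=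
    (gSub_eq_cyc u hj1 hj2 hi1 hi2 hgap.symm).trans (cycWalk_swap hi1 hi2 hj1 hj2 hgap)
  have c3 : gSub n (u * bsGen n i, fi, fj) = K :=
    (gSub_eq_cyc _ hi1 hi2 hj1 hj2 hgap).trans (cycWalk_shift hi1 hi2 hj1 hj2 hgap)
  have c4 : gSub n (u * bsGen n i, fj, fi) = K :=
    (gSub_eq_cyc _ hj1 hj2 hi1 hi2 hgap.symm).trans
      ((cycWalk_swap hi1 hi2 hj1 hj2 hgap).trans (cycWalk_shift hi1 hi2 hj1 hj2 hgap))
  have c6 : gSub n (u * bsGen n j, fj, fi) = K :=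
    (gSub_eq_cyc _ hj1 hj2 hi1 hi2 hgap.symm).trans
      ((cycWalk_shift hj1 hj2 hi1 hi2 hgap.symm).trans (cycWalk_swap hi1 hi2 hj1 hj2 hgap))
  have c5 : gSub n (u * bsGen n j, fi, fj) = K :=
    (gSub_eq_cyc _ hi1 hi2 hj1 hj2 hgap).trans
      ((cycWalk_swap hj1 hj2 hi1 hi2 hgap.symm).trans
        ((cycWalk_shift hj1 hj2 hi1 hi2 hgap.symm).trans (cycWalk_swap hi1 hi2 hj1 hj2 hgap)))
  have c8 : gSub n (u * bsGen n i * bsGen n j, fj, fi) = K :=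
    (gSub_eq_cyc _ hj1 hj2 hi1 hi2 hgap.symm).trans
      ((cycWalk_shift (π := u * bsGen n i) hj1 hj2 hi1 hi2 hgap.symm).trans
        ((cycWalk_swap hi1 hi2 hj1 hj2 hgap).trans (cycWalk_shift hi1 hi2 hj1 hj2 hgap)))
  have c7 : gSub n (u * bsGen n i * bsGen n j, fi, fj) = K :=
    (gSub_eq_cyc _ hi1 hi2 hj1 hj2 hgap).trans
      ((cycWalk_swap hj1 hj2 hi1 hi2 hgap.symm).trans
        ((cycWalk_shift (π := u * bsGen n i) hj1 hj2 hi1 hi2 hgap.symm).trans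
          ((cycWalk_swap hi1 hi2 hj1 hj2 hgap).trans (cycWalk_shift hi1 hi2 hj1 hj2 hgap))))
  -- the filter is exactly L
  have hfilter : ((Finset.univ : Finset (Equiv.Perm (Fin n) × Fin n × Fin n)).filter
      (fun t => bsCond n t ∧ gSub n t = K)) = L.toFinset := by
    ext t
    obtain ⟨π, x, y⟩ := t
    simp only [Finset.mem_filter, Finset.mem_univ, true_and, hL, List.toFinset_cons,
      List.toFinset_nil, Finset.mem_insert, Finset.mem_singleton, Prod.mk.injEq,
      insert_empty_eq]
    constructor
    · rintro ⟨hcond, hgK⟩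
      obtain ⟨hx1, hy1, hgxy⟩ := hcond
      have hEq : (cycWalk π hx1 x.isLt hy1 y.isLt hgxy).toSubgraph =
          (cycWalk u hi1 hi2 hj1 hj2 hgap).toSubgraph := by
        have h' := hgK
        rw [gSub, dif_pos (show bsCond n (π, x, y) from ⟨hx1, hy1, hgxy⟩)] at h'
        exact h'
      obtain ⟨hv, hp⟩ := fiber_mem8 hEq
      have hxy : (x = fi ∧ y = fj) ∨ (x = fj ∧ y = fi) := by
        rcases hp with ⟨h1, h2⟩ | ⟨h1, h2⟩
        · exact Or.inl ⟨Fin.val_injective h1, Fin.val_injective h2⟩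
        · exact Or.inr ⟨Fin.val_injective h1, Fin.val_injective h2⟩
      rcases hv with h | h | h | h <;> rcases hxy with ⟨h1, h2⟩ | ⟨h1, h2⟩
      · exact Or.inl ⟨h, h1, h2⟩
      · exact Or.inr (Or.inl ⟨h, h1, h2⟩)
      · exact Or.inr (Or.inr (Or.inl ⟨h, h1, h2⟩))
      · exact Or.inr (Or.inr (Or.inr (Or.inl ⟨h, h1, h2⟩)))
      · exact Or.inr (Or.inr (Or.inr (Or.inr (Or.inr (Or.inr (Or.inl ⟨h, h1, h2⟩))))))
      · exact Or.inr (Or.inr (Or.inr (Or.inr (Or.inr (Or.inr (Or.inr ⟨h, h1, h2⟩))))))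
      · exact Or.inr (Or.inr (Or.inr (Or.inr (Or.inl ⟨h, h1, h2⟩))))
      · exact Or.inr (Or.inr (Or.inr (Or.inr (Or.inr (Or.inl ⟨h, h1, h2⟩)))))
    · intro hmem
      rcases hmem with ⟨rfl, rfl, rfl⟩ | ⟨rfl, rfl, rfl⟩ | ⟨rfl, rfl, rfl⟩ | ⟨rfl, rfl, rfl⟩ |
        ⟨rfl, rfl, rfl⟩ | ⟨rfl, rfl, rfl⟩ | ⟨rfl, rfl, rfl⟩ | ⟨rfl, rfl, rfl⟩
      · exact ⟨⟨hi1, hj1, hgap⟩, c1⟩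
      · exact ⟨⟨hj1, hi1, hgap.symm⟩, c2⟩
      · exact ⟨⟨hi1, hj1, hgap⟩, c3⟩
      · exact ⟨⟨hj1, hi1, hgap.symm⟩, c4⟩
      · exact ⟨⟨hi1, hj1, hgap⟩, c5⟩
      · exact ⟨⟨hj1, hi1, hgap.symm⟩, c6⟩
      · exact ⟨⟨hi1, hj1, hgap⟩, c7⟩
      · exact ⟨⟨hj1, hi1, hgap.symm⟩, c8⟩
  have hnodup : L.Nodup := by
    simp only [hL, List.nodup_cons, List.mem_cons, List.not_mem_nil, or_false,
      List.nodup_nil, and_true, Prod.mk.injEq, not_or]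
    push_neg
    tauto
  rw [hfilter, List.toFinset_card_of_nodup hnodup, hL]
  rfl

end FiberCard

/-- for `n ≥ 4`, the total number of distinct 4-cycles in `BS_n`
equals `(n-2)(n-3)·n!/8`. -/
theorem bs_four_cycles_total (n : ℕ) (hn : 4 ≤ n) :
    {H : (BS n).Subgraph | IsCycleSub H 4}.ncard = (n - 2) * (n - 3) * Nat.factorial n / 8 := by
  classical
  have hfin : {H : (BS n).Subgraph | IsCycleSub H 4}.Finite := by
    apply Set.Finite.subset (Set.finite_range (gSub n))
    rintro H hH
    obtain ⟨u, i, j, hi1, hi2, hj1, hj2, hgap, rfl⟩ := cycle4_decomp hH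
    exact ⟨(u, ⟨i, hi2⟩, ⟨j, hj2⟩), gSub_eq_cyc u hi1 hi2 hj1 hj2 hgap⟩
  set T : Finset (Equiv.Perm (Fin n) × Fin n × Fin n) :=
    Finset.univ.filter (bsCond n) with hT
  set Sfin := hfin.toFinset with hSfin
  have hmap : ∀ t ∈ T, gSub n t ∈ Sfin := by
    intro t ht
    rw [hSfin, Set.Finite.mem_toFinset]
    exact gSub_isCycleSub (Finset.mem_filter.mp ht).2
  have hcount := Finset.card_eq_sum_card_fiberwise hmap
  have hfib : ∀ H ∈ Sfin, (T.filter (fun t => gSub n t = H)).card = 8 := by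
    intro H hH
    rw [hSfin, Set.Finite.mem_toFinset] at hH
    obtain ⟨u, i, j, hi1, hi2, hj1, hj2, hgap, rfl⟩ := cycle4_decomp hH
    rw [hT, Finset.filter_filter]
    exact fiber_card u hi1 hi2 hj1 hj2 hgap
  rw [Finset.sum_congr rfl hfib, Finset.sum_const, smul_eq_mul] at hcount
  have hTcard : T.card = Nat.factorial n * ((n - 2) * (n - 3)) := by
    have hTprod : T = Finset.univ ×ˢ (Finset.univ.filter
        (fun p : Fin n × Fin n => 0 < (p.1 : ℕ) ∧ 0 < (p.2 : ℕ) ∧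
          ((p.1 : ℕ) + 2 ≤ (p.2 : ℕ) ∨ (p.2 : ℕ) + 2 ≤ (p.1 : ℕ)))) := by
      ext t
      simp only [hT, Finset.mem_filter, Finset.mem_univ, true_and, Finset.mem_product, bsCond]
    rw [hTprod, Finset.card_product, finpairs_card, Finset.card_univ, Fintype.card_perm,
      Fintype.card_fin]
  have hncard : {H : (BS n).Subgraph | IsCycleSub H 4}.ncard = Sfin.card := by
    rw [hSfin]
    exact Set.ncard_eq_toFinset_card _ hfin
  rw [hncard]
  have h8 : (n - 2) * (n - 3) * Nat.factorial n = Sfin.card * 8 := by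
    rw [← hcount, hTcard]; ring
  rw [h8, Nat.mul_div_cancel _ (by norm_num)]
end

section
/- Let n ≥ 3, let π be a vertex of the Bubble-sort graph BS_n, and let 1 ≤ d ≤ n−2 and 1 ≤ j ≤ n−d. Set τ = π · b_j · b_{j+1} · ⋯ · b_{j+d−1} (a product of d successively dependent adjacent transpositions, which shifts one entry of π by d positions). Then the walk π, π b_j, π b_j b_{j+1}, …, τ is the unique path of length d in BS_n from π to τ; in particular there is no second path of length d between π and τ that is internally disjoint from it. -/
/-- The set of generator labels carried by the edges of a subgraph `H` of `BS n`:
an edge `{π, τ}` carries the unique generator label `π⁻¹ * τ`. -/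
def labelSet {n : ℕ} (H : (BS n).Subgraph) : Set (Equiv.Perm (Fin n)) :=
  {g | ∃ π τ, H.Adj π τ ∧ g = π⁻¹ * τ}

/-- The list of generator labels read along a walk in `BS n`. -/
def labelList {n : ℕ} {u v : Equiv.Perm (Fin n)} (w : (BS n).Walk u v) :
    List (Equiv.Perm (Fin n)) :=
  w.darts.map (fun d => d.toProd.1⁻¹ * d.toProd.2)

/-- The cycle subgraph `H` has the form given by the list of generators `L`:
reading the edge labels along the cycle from some vertex in some direction yields `L`. -/
def HasForm {n : ℕ} (H : (BS n).Subgraph) (L : List (Equiv.Perm (Fin n))) : Prop :=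
  ∃ (σ : Equiv.Perm (Fin n)) (w : (BS n).Walk σ σ),
    w.IsCycle ∧ H = w.toSubgraph ∧ labelList w = L

namespace BSAux

variable {n : ℕ}

lemma bsGen_apply (i : ℕ) (h1 : 0 < i) (h2 : i < n) (x : Fin n) :
    ((bsGen n i) x).val = if x.val = i - 1 then i else if x.val = i then i - 1 else x.val := by
  rw [bsGen, dif_pos ⟨h1, h2⟩, Equiv.swap_apply_def]
  simp only [Fin.ext_iff]
  split_ifs <;> simp_all <;> omega

/-- displacement potential -/
def phi (g : Equiv.Perm (Fin n)) : ℤ := ∑ x : Fin n, |((g x).val : ℤ) - (x.val : ℤ)|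

lemma phi_one : phi (1 : Equiv.Perm (Fin n)) = 0 := by
  simp [phi]

lemma phi_mul (i : ℕ) (h1 : 0 < i) (h2 : i < n) (h : Equiv.Perm (Fin n)) (p q : Fin n)
    (hp : (h p).val = i - 1) (hq : (h q).val = i) :
    phi (bsGen n i * h) = phi h
      - |(i : ℤ) - 1 - (p.val : ℤ)| - |(i : ℤ) - (q.val : ℤ)|
      + |(i : ℤ) - (p.val : ℤ)| + |(i : ℤ) - 1 - (q.val : ℤ)| := by
  classical
  have hpq : p ≠ q := by
    intro e; rw [e, hq] at hp; omega
  have hpfin : h p = ⟨i - 1, lt_of_le_of_lt (Nat.pred_le i) h2⟩ := Fin.ext hp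
  have hqfin : h q = ⟨i, h2⟩ := Fin.ext hq
  have hb : bsGen n i = Equiv.swap ⟨i - 1, lt_of_le_of_lt (Nat.pred_le i) h2⟩ ⟨i, h2⟩ := by
    rw [bsGen, dif_pos ⟨h1, h2⟩]
  have key : ∀ x : Fin n, x ≠ p → x ≠ q → (bsGen n i * h) x = h x := by
    intro x hxp hxq
    rw [Equiv.Perm.mul_apply, hb, Equiv.swap_apply_of_ne_of_ne]
    · exact fun e => hxp (h.injective (e.trans hpfin.symm))
    · exact fun e => hxq (h.injective (e.trans hqfin.symm))
  have vp : ((bsGen n i * h) p).val = i := by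
    rw [Equiv.Perm.mul_apply, hpfin, hb, Equiv.swap_apply_left]
  have vq : ((bsGen n i * h) q).val = i - 1 := by
    rw [Equiv.Perm.mul_apply, hqfin, hb, Equiv.swap_apply_right]
  have split : ∀ g : Equiv.Perm (Fin n),
      phi g = (∑ x ∈ ({p, q} : Finset (Fin n))ᶜ, |((g x).val : ℤ) - (x.val : ℤ)|)
        + (|((g p).val : ℤ) - (p.val : ℤ)| + |((g q).val : ℤ) - (q.val : ℤ)|) := by
    intro g
    rw [phi, ← Finset.sum_compl_add_sum ({p, q} : Finset (Fin n))]
    congr 1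
    rw [Finset.sum_pair hpq]
  rw [split (bsGen n i * h), split h]
  have e0 : ∑ x ∈ (({p, q} : Finset (Fin n))ᶜ), |(((bsGen n i * h) x).val : ℤ) - (x.val : ℤ)|
      = ∑ x ∈ (({p, q} : Finset (Fin n))ᶜ), |((h x).val : ℤ) - (x.val : ℤ)| := by
    refine Finset.sum_congr rfl fun x hx => ?_
    simp only [Finset.mem_compl, Finset.mem_insert, Finset.mem_singleton, not_or] at hx
    rw [key x hx.1 hx.2]
  rw [e0, vp, vq, hp, hq]
  have c1 : ((i - 1 : ℕ) : ℤ) = (i : ℤ) - 1 := by omega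
  rw [c1]
  ring

lemma phi_mul_le (i : ℕ) (h1 : 0 < i) (h2 : i < n) (h : Equiv.Perm (Fin n)) :
    phi (bsGen n i * h) ≤ phi h + 2 := by
  have hp : (h (h⁻¹ ⟨i - 1, lt_of_le_of_lt (Nat.pred_le i) h2⟩)).val = i - 1 := by
    rw [Equiv.Perm.coe_inv, Equiv.apply_symm_apply]
  have hq : (h (h⁻¹ ⟨i, h2⟩)).val = i := by
    rw [Equiv.Perm.coe_inv, Equiv.apply_symm_apply]
  rw [phi_mul i h1 h2 h _ _ hp hq]
  set P := ((h⁻¹ ⟨i - 1, lt_of_le_of_lt (Nat.pred_le i) h2⟩ : Fin n).val : ℤ)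
  set Q := ((h⁻¹ ⟨i, h2⟩ : Fin n).val : ℤ)
  have a1 : |(i : ℤ) - P| - |(i : ℤ) - 1 - P| ≤ 1 := by
    have := abs_sub_abs_le_abs_sub ((i : ℤ) - P) ((i : ℤ) - 1 - P)
    simp only [show (i : ℤ) - P - ((i : ℤ) - 1 - P) = 1 by ring] at this
    simpa using this
  have a2 : |(i : ℤ) - 1 - Q| - |(i : ℤ) - Q| ≤ 1 := by
    have := abs_sub_abs_le_abs_sub ((i : ℤ) - 1 - Q) ((i : ℤ) - Q)
    simp only [show (i : ℤ) - 1 - Q - ((i : ℤ) - Q) = -1 by ring] at this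
    simpa using this
  linarith

lemma phi_prod_le (L : List (Equiv.Perm (Fin n)))
    (hL : ∀ l ∈ L, ∃ i, 0 < i ∧ i < n ∧ l = bsGen n i) :
    phi L.prod ≤ 2 * L.length := by
  induction L with
  | nil => simp [phi_one]
  | cons g L ih =>
    obtain ⟨i, h1, h2, rfl⟩ := hL g List.mem_cons_self
    have := phi_mul_le i h1 h2 L.prod
    have ih' := ih (fun l hl => hL l (List.mem_cons_of_mem _ hl))
    rw [List.prod_cons]
    simp only [List.length_cons]
    push_cast
    linarith


/-- the canonical product `b_j b_{j+1} ⋯ b_{j+d-1}` -/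
def sig (n j d : ℕ) : Equiv.Perm (Fin n) :=
  (List.map (fun t => bsGen n (j + t)) (List.range d)).prod

lemma map_range_succ {α : Type*} (f : ℕ → α) (j d : ℕ) :
    List.map (fun t => f (j + t)) (List.range (d + 1))
      = f j :: List.map (fun t => f (j + 1 + t)) (List.range d) := by
  rw [List.range_succ_eq_map, List.map_cons, List.map_map]
  refine congrArg₂ _ (by simp) ?_
  refine List.map_congr_left fun t _ => ?_
  simp only [Function.comp_apply]
  congr 1
  omega

lemma sig_zero (j : ℕ) : sig n j 0 = 1 := by simp [sig]

lemma sig_succ (j d : ℕ) : sig n j (d + 1) = bsGen n j * sig n (j + 1) d := by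
  rw [sig, map_range_succ, List.prod_cons]; rfl

lemma sig_one (j : ℕ) : sig n j 1 = bsGen n j := by
  have := sig_succ (n := n) j 0
  rw [sig_zero, mul_one] at this
  exact this

lemma sig_apply : ∀ (d j : ℕ) (x : Fin n), 1 ≤ j → j + d ≤ n →
    ((sig n j d) x).val =
      if j - 1 ≤ x.val ∧ x.val + 1 < j + d then x.val + 1
      else if x.val + 1 = j + d ∧ d ≠ 0 then j - 1
      else x.val
  | 0, j, x, hj, hjd => by
    rw [sig_zero]
    simp only [Equiv.Perm.one_apply]
    split_ifs <;> omega
  | d + 1, j, x, hj, hjd => by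
    rw [sig_succ, Equiv.Perm.mul_apply, bsGen_apply j (by omega) (by omega),
      sig_apply d (j + 1) x (by omega) (by omega)]
    have := x.isLt
    split_ifs <;> omega

lemma phi_sig : ∀ (d j : ℕ), 1 ≤ j → j + d ≤ n → phi (sig n j d) = 2 * d
  | 0, j, hj, hjd => by rw [sig_zero, phi_one]; simp
  | d + 1, j, hj, hjd => by
    have hp : ((sig n (j + 1) d) ⟨j - 1, by omega⟩).val = j - 1 := by
      rw [sig_apply d (j + 1) _ (by omega) (by omega)]
      simp only [Fin.val_mk]
      split_ifs <;> omega
    have hq : ((sig n (j + 1) d) ⟨j + d, by omega⟩).val = j := by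
      rw [sig_apply d (j + 1) _ (by omega) (by omega)]
      simp only [Fin.val_mk]
      split_ifs <;> omega
    rw [sig_succ, phi_mul j (by omega) (by omega) _ _ _ hp hq,
      phi_sig d (j + 1) (by omega) (by omega)]
    have e1 : ((j : ℤ) - 1 - ((⟨j - 1, by omega⟩ : Fin n).val : ℤ)) = 0 := by
      simp only [Fin.val_mk]; omega
    have e2 : ((j : ℤ) - ((⟨j + d, by omega⟩ : Fin n).val : ℤ)) = -(d : ℤ) := by
      simp only [Fin.val_mk]; omega
    have e3 : ((j : ℤ) - ((⟨j - 1, by omega⟩ : Fin n).val : ℤ)) = 1 := by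
      simp only [Fin.val_mk]; omega
    have e4 : ((j : ℤ) - 1 - ((⟨j + d, by omega⟩ : Fin n).val : ℤ)) = -((d : ℤ) + 1) := by
      simp only [Fin.val_mk]; omega
    rw [e1, e2, e3, e4, abs_zero, abs_neg, abs_neg, abs_one,
      abs_of_nonneg (by positivity : (0:ℤ) ≤ (d:ℤ)), abs_of_nonneg (by positivity : (0:ℤ) ≤ (d:ℤ)+1)]
    push_cast
    ring

lemma force (i p q : ℤ) (h : |i - p| + |i - 1 - q| + 2 ≤ |i - 1 - p| + |i - q|) :
    i ≤ p ∧ q ≤ i - 1 := by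
  have B1 := abs_nonneg (i - 1 - p)
  have B2 := abs_nonneg (i - q)
  have B3 := abs_nonneg (i - p)
  have B4 := abs_nonneg (i - 1 - q)
  rcases abs_choice (i - 1 - p) with h1 | h1 <;> rw [h1] at B1 h <;>
    rcases abs_choice (i - q) with h2 | h2 <;> rw [h2] at B2 h <;>
      rcases abs_choice (i - p) with h3 | h3 <;> rw [h3] at B3 h <;>
        rcases abs_choice (i - 1 - q) with h4 | h4 <;> rw [h4] at B4 h <;>
          omega

lemma descent (i j d : ℕ) (hi1 : 0 < i) (hi2 : i < n) (hj : 1 ≤ j) (hd : 1 ≤ d)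
    (hjd : j + d ≤ n) (hle : phi (bsGen n i * sig n j d) ≤ 2 * (d : ℤ) - 2) : i = j := by
  set h := sig n j d with hh
  set p := h⁻¹ ⟨i - 1, lt_of_le_of_lt (Nat.pred_le i) hi2⟩ with hpdef
  set q := h⁻¹ ⟨i, hi2⟩ with hqdef
  have hp : (h p).val = i - 1 := by rw [hpdef, Equiv.Perm.coe_inv, Equiv.apply_symm_apply]
  have hq : (h q).val = i := by rw [hqdef, Equiv.Perm.coe_inv, Equiv.apply_symm_apply]
  rw [phi_mul i hi1 hi2 h p q hp hq, hh, phi_sig d j hj hjd] at hle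
  have hF := force (i : ℤ) (p.val : ℤ) (q.val : ℤ) (by linarith)
  have Hp : (if j - 1 ≤ p.val ∧ p.val + 1 < j + d then p.val + 1
      else if p.val + 1 = j + d ∧ d ≠ 0 then j - 1 else p.val) = i - 1 := by
    rw [← sig_apply d j p hj hjd]; exact hp
  have FP := hF.1
  split_ifs at Hp <;> omega

lemma core : ∀ (d j : ℕ) (L : List (Equiv.Perm (Fin n))), 1 ≤ j → j + d ≤ n →
    (∀ l ∈ L, ∃ i, 0 < i ∧ i < n ∧ l = bsGen n i) → L.length = d → L.prod = sig n j d →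
    L = List.map (fun t => bsGen n (j + t)) (List.range d)
  | 0, j, L, _, _, _, hlen, _ => by
    simpa using List.eq_nil_of_length_eq_zero hlen
  | d + 1, j, [], _, _, _, hlen, _ => by simp at hlen
  | d + 1, j, g :: L, hj, hjd, hmem, hlen, hprod => by
    obtain ⟨i, hi1, hi2, rfl⟩ := hmem g List.mem_cons_self
    rw [List.prod_cons] at hprod
    have hL : L.prod = bsGen n i * sig n j (d + 1) := by
      calc L.prod = bsGen n i * (bsGen n i * L.prod) := by
            rw [← mul_assoc, bsGen_mul_self, one_mul]
        _ = bsGen n i * sig n j (d + 1) := by rw [hprod]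
    have hmem' : ∀ l ∈ L, ∃ i, 0 < i ∧ i < n ∧ l = bsGen n i :=
      fun l hl => hmem l (List.mem_cons_of_mem _ hl)
    have hlen' : L.length = d := by simpa using hlen
    have hphi : phi (bsGen n i * sig n j (d + 1)) ≤ 2 * ((d : ℤ) + 1) - 2 := by
      rw [← hL]
      have := phi_prod_le L hmem'
      rw [hlen'] at this
      push_cast at this ⊢
      linarith
    have hij : i = j := by
      refine descent i j (d + 1) hi1 hi2 hj (by omega) hjd ?_
      push_cast at hphi ⊢
      linarith
    subst hij
    have hL2 : L.prod = sig n (i + 1) d := by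
      rw [hL, sig_succ, ← mul_assoc, bsGen_mul_self, one_mul]
    have hrec := core d (i + 1) L (by omega) (by omega) hmem' hlen' hL2
    rw [hrec, map_range_succ]

lemma take_range (k d : ℕ) : (List.range d).take k = List.range (min k d) := by
  refine List.ext_getElem (by simp) fun i h1 h2 => ?_
  simp

lemma labelList_nil {u : Equiv.Perm (Fin n)} :
    labelList (SimpleGraph.Walk.nil : (BS n).Walk u u) = [] := rfl

lemma labelList_cons {u x v : Equiv.Perm (Fin n)} (h : (BS n).Adj u x) (w : (BS n).Walk x v) :
    labelList (SimpleGraph.Walk.cons h w) = (u⁻¹ * x) :: labelList w := rfl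

lemma labelList_length {u v : Equiv.Perm (Fin n)} (w : (BS n).Walk u v) :
    (labelList w).length = w.length := by
  rw [labelList, List.length_map, SimpleGraph.Walk.length_darts]

lemma end_eq {u v : Equiv.Perm (Fin n)} (w : (BS n).Walk u v) :
    v = u * (labelList w).prod := by
  induction w with
  | nil => simp [labelList_nil]
  | cons h w ih =>
    rw [labelList_cons, List.prod_cons, ← mul_assoc, mul_inv_cancel_left]
    exact ih

lemma labels_mem {u v : Equiv.Perm (Fin n)} (w : (BS n).Walk u v) :
    ∀ l ∈ labelList w, ∃ i, 0 < i ∧ i < n ∧ l = bsGen n i := by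
  induction w with
  | nil => simp [labelList_nil]
  | cons h w ih =>
    intro l hl
    rw [labelList_cons, List.mem_cons] at hl
    rcases hl with rfl | hl
    · obtain ⟨i, h1, h2, he⟩ := h
      exact ⟨i, h1, h2, by rw [he, inv_mul_cancel_left]⟩
    · exact ih l hl

lemma walk_eq_of_labels {u v : Equiv.Perm (Fin n)} (w w' : (BS n).Walk u v) :
    labelList w = labelList w' → w = w' := by
  induction w with
  | nil =>
    intro h
    have hlen : w'.length = 0 := by
      rw [← labelList_length, ← h, labelList_nil]; rfl
    exact (SimpleGraph.Walk.nil_iff_eq_nil.mp (SimpleGraph.Walk.length_eq_zero_iff.mp hlen)).symm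
  | cons a w1 ih =>
    intro h
    cases w' with
    | nil => simp [labelList_nil, labelList_cons] at h
    | cons a' w1' =>
      rw [labelList_cons, labelList_cons] at h
      simp only [List.cons.injEq] at h
      obtain rfl : _ = _ := mul_left_cancel h.1
      rw [ih w1' h.2]

lemma mem_support_take {u v x : Equiv.Perm (Fin n)} (w : (BS n).Walk u v)
    (hx : x ∈ w.support) : ∃ k, x = u * ((labelList w).take k).prod := by
  induction w with
  | nil =>
    simp only [SimpleGraph.Walk.support_nil, List.mem_singleton] at hx
    exact ⟨0, by simp [hx]⟩
  | cons h w ih =>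
    rw [SimpleGraph.Walk.support_cons, List.mem_cons] at hx
    rcases hx with rfl | hx
    · exact ⟨0, by simp⟩
    · obtain ⟨k, hk⟩ := ih hx
      refine ⟨k + 1, ?_⟩
      rw [labelList_cons, List.take_succ_cons, List.prod_cons, ← mul_assoc,
        mul_inv_cancel_left]
      exact hk

lemma exists_path : ∀ (d j : ℕ) (π : Equiv.Perm (Fin n)), 1 ≤ j → j + d ≤ n →
    ∃ w : (BS n).Walk π (π * sig n j d), w.IsPath ∧ w.length = d ∧
      labelList w = List.map (fun t => bsGen n (j + t)) (List.range d)
  | 0, j, π, hj, hjd => by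
    rw [sig_zero, mul_one]
    exact ⟨.nil, SimpleGraph.Walk.IsPath.nil, rfl, rfl⟩
  | d + 1, j, π, hj, hjd => by
    obtain ⟨w', hP, hL, hlab⟩ := exists_path d (j + 1) (π * bsGen n j) (by omega) (by omega)
    have hstep : π * sig n j (d + 1) = (π * bsGen n j) * sig n (j + 1) d := by
      rw [sig_succ, mul_assoc]
    rw [hstep]
    have hadj : (BS n).Adj π (π * bsGen n j) := ⟨j, by omega, by omega, rfl⟩
    refine ⟨SimpleGraph.Walk.cons hadj w', ?_, ?_, ?_⟩
    · rw [SimpleGraph.Walk.cons_isPath_iff]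
      refine ⟨hP, fun hmem => ?_⟩
      obtain ⟨k, hk⟩ := mem_support_take w' hmem
      rw [hlab, ← List.map_take, take_range] at hk
      have hsig : sig n (j + 1) (min k d) = bsGen n j := by
        have h1 : bsGen n j * sig n (j + 1) (min k d) = 1 := by
          have h2 : π * (bsGen n j * sig n (j + 1) (min k d)) = π * 1 := by
            rw [mul_one, ← mul_assoc]; exact hk.symm
          exact mul_left_cancel h2
        have h3 := eq_inv_of_mul_eq_one_right h1
        rw [h3, inv_eq_of_mul_eq_one_right (bsGen_mul_self n j)]
      have hm : min k d ≤ d := min_le_right _ _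
      have hphi1 : phi (sig n (j + 1) (min k d)) = 2 * (min k d : ℕ) :=
        phi_sig _ _ (by omega) (by omega)
      have hphi2 : phi (sig n j 1) = 2 * (1 : ℕ) := phi_sig 1 j (by omega) (by omega)
      rw [sig_one] at hphi2
      rw [hsig, hphi2] at hphi1
      have hmk : min k d = 1 := by omega
      have hd1 : 1 ≤ d := by omega
      have heq : bsGen n (j + 1) = bsGen n j := by
        rw [hmk, sig_one] at hsig
        exact hsig
      have hv := congrArg (fun g => ((g : Equiv.Perm (Fin n)) (⟨j, by omega⟩ : Fin n)).val) heq
      rw [bsGen_apply (j + 1) (by omega) (by omega), bsGen_apply j (by omega) (by omega)] at hv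
      simp only [Fin.val_mk] at hv
      split_ifs at hv <;> omega
    · simp [hL]
    · rw [labelList_cons, inv_mul_cancel_left, hlab]
      exact (map_range_succ (fun i => bsGen n i) j d).symm

end BSAux

/-- in `BS_n`, `n ≥ 3`, for `1 ≤ d ≤ n-2`, `1 ≤ j ≤ n-d` and
`τ = π · b_j · b_{j+1} · ⋯ · b_{j+d-1}`, the walk `π, πb_j, πb_jb_{j+1}, …, τ` is the
unique path of length `d` from `π` to `τ` (so in particular there is no second,
internally disjoint, path of length `d`). -/
theorem bs_dependent_shift_unique_path (n : ℕ) (hn : 3 ≤ n) (π : Equiv.Perm (Fin n))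
    (d j : ℕ) (hd1 : 1 ≤ d) (hd2 : d ≤ n - 2) (hj1 : 1 ≤ j) (hj2 : j ≤ n - d) :
    (∃! w : (BS n).Walk π (π * (List.map (fun t => bsGen n (j + t)) (List.range d)).prod),
        w.IsPath ∧ w.length = d) ∧
      ∀ w : (BS n).Walk π (π * (List.map (fun t => bsGen n (j + t)) (List.range d)).prod),
        w.IsPath → w.length = d →
          labelList w = List.map (fun t => bsGen n (j + t)) (List.range d) := by
  have hjd : j + d ≤ n := by omega
  have hsig : (List.map (fun t => bsGen n (j + t)) (List.range d)).prod = BSAux.sig n j d := rfl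
  rw [hsig]
  obtain ⟨w₀, hP₀, hL₀, hlab₀⟩ := BSAux.exists_path d j π hj1 hjd
  have forced : ∀ w : (BS n).Walk π (π * BSAux.sig n j d), w.length = d →
      labelList w = List.map (fun t => bsGen n (j + t)) (List.range d) := by
    intro w hw
    refine BSAux.core d j (labelList w) hj1 hjd (BSAux.labels_mem w)
      (by rw [BSAux.labelList_length, hw]) ?_
    have he := BSAux.end_eq w
    exact (mul_left_cancel he).symm
  refine ⟨⟨w₀, ⟨hP₀, hL₀⟩, fun w hw => ?_⟩, fun w _ hw => forced w hw⟩
  exact BSAux.walk_eq_of_labels w w₀ (by rw [forced w hw.2, ← hlab₀])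
end
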